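/- The number of parking functions of length n equals (n+1)^(n-1) for all n ≥ 1. -/

import Mathlib

open Finset

/-- `IsPF n π` : `π` is a parking function of length `n`, i.e. a sequence of
positive integers whose weakly increasing rearrangement `b₁ ≤ ⋯ ≤ bₙ`
satisfies `b_j ≤ j` for all `1 ≤ j ≤ n`. -/
def IsPF (n : ℕ) (π : Fin n → ℕ) : Prop :=
  (∀ i, 1 ≤ π i) ∧ ∃ σ : Equiv.Perm (Fin n),
    (Monotone fun j => π (σ j)) ∧ ∀ j : Fin n, π (σ j) ≤ j.val + 1


lemma card_filter_fin_lt {n k : ℕ} (hk : k ≤ n) :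
    ((Finset.univ : Finset (Fin n)).filter (fun j : Fin n => (j : ℕ) < k)).card = k := by
  have h : ∀ m ∈ Finset.range k, m < n := fun m hm => lt_of_lt_of_le (Finset.mem_range.mp hm) hk
  have : ((Finset.univ : Finset (Fin n)).filter (fun j : Fin n => (j : ℕ) < k)) =
      (Finset.range k).attachFin h := by
    ext x
    simp [Finset.mem_attachFin]
  rw [this, Finset.card_attachFin, Finset.card_range]

lemma isPF_iff {n : ℕ} (π : Fin n → ℕ) :
    IsPF n π ↔ ((∀ i, 1 ≤ π i) ∧
      ∀ k, k ≤ n → k ≤ ((Finset.univ : Finset (Fin n)).filter (fun i => π i ≤ k)).card) := by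
  constructor
  · rintro ⟨hpos, σ, hmono, hbound⟩
    refine ⟨hpos, fun k hk => ?_⟩
    have := Finset.card_le_card_of_injOn (f := fun j : Fin n => σ j)
      (s := (Finset.univ : Finset (Fin n)).filter (fun j : Fin n => (j : ℕ) < k))
      (t := (Finset.univ : Finset (Fin n)).filter (fun i => π i ≤ k))
      (fun j hj => by
        simp only [Finset.mem_coe, Finset.mem_filter, Finset.mem_univ, true_and] at hj ⊢
        exact le_trans (hbound j) (by omega))
      (fun a _ b _ hab => σ.injective hab)
    rwa [card_filter_fin_lt hk] at this
  · rintro ⟨hpos, hcount⟩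
    refine ⟨hpos, Tuple.sort π, Tuple.monotone_sort π, fun j => ?_⟩
    by_contra hcon
    push_neg at hcon
    -- π (sort π j) ≥ j + 2
    have hk : (j : ℕ) + 1 ≤ n := j.2
    have hle := hcount ((j : ℕ) + 1) hk
    have hsub : ((Finset.univ : Finset (Fin n)).filter (fun i => π i ≤ (j : ℕ) + 1)) ⊆
        ((Finset.univ : Finset (Fin n)).filter (fun j' : Fin n => (j' : ℕ) < (j : ℕ))).image
          (fun j' : Fin n => Tuple.sort π j') := by
      intro i hi
      simp only [Finset.mem_filter, Finset.mem_univ, true_and] at hi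
      simp only [Finset.mem_image, Finset.mem_filter, Finset.mem_univ, true_and]
      refine ⟨(Tuple.sort π)⁻¹ i, ?_, by simp⟩
      by_contra hge
      push_neg at hge
      have : π (Tuple.sort π j) ≤ π (Tuple.sort π ((Tuple.sort π)⁻¹ i)) :=
        Tuple.monotone_sort π (by exact_mod_cast hge)
      simp only [Equiv.Perm.inv_def, Equiv.apply_symm_apply] at this
      omega
    have hcard := Finset.card_le_card hsub
    have himg : (((Finset.univ : Finset (Fin n)).filter (fun j' : Fin n => (j' : ℕ) < (j : ℕ))).image
        (fun j' : Fin n => Tuple.sort π j')).card ≤ (j : ℕ) := by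
      calc _ ≤ ((Finset.univ : Finset (Fin n)).filter (fun j' : Fin n => (j' : ℕ) < (j : ℕ))).card :=
            Finset.card_image_le
        _ = (j : ℕ) := card_filter_fin_lt (le_of_lt j.2)
    omega



lemma mod_of_lt_two_mul {M y : ℕ} (hM : 0 < M) (hy : y < 2 * M) :
    y % M = if y < M then y else y - M := by
  split_ifs with h
  · exact Nat.mod_eq_of_lt h
  · rw [Nat.mod_eq_sub_mod (le_of_not_gt h)]
    exact Nat.mod_eq_of_lt (by omega)

lemma zmod_sub_val {n : ℕ} (a : ZMod (n+1)) (m : ℕ) :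
    (a - (m : ZMod (n+1))).val =
      if m % (n+1) ≤ a.val then a.val - m % (n+1) else a.val + (n+1) - m % (n+1) := by
  set r := m % (n+1) with hr
  have hrlt : r < n + 1 := Nat.mod_lt _ (Nat.succ_pos n)
  have hm : (m : ZMod (n+1)) = (r : ZMod (n+1)) := by
    rw [hr, ZMod.natCast_mod]
  set x := (a - (m : ZMod (n+1))).val with hx
  have hxlt : x < n + 1 := ZMod.val_lt _
  have halt : a.val < n + 1 := ZMod.val_lt _
  have key : (x + r) % (n+1) = a.val := by
    have h2 : ((x : ZMod (n+1)) + (r : ZMod (n+1))) = a := by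
      rw [hx, ZMod.natCast_zmod_val, hm]
      ring
    calc (x + r) % (n+1) = (((x : ℕ) : ZMod (n+1)) + ((r : ℕ) : ZMod (n+1))).val := by
          rw [← Nat.cast_add, ZMod.val_natCast]
      _ = a.val := by rw [h2]
  rw [mod_of_lt_two_mul (Nat.succ_pos n) (by omega)] at key
  split_ifs at key ⊢ <;> omega

/-- number of `i` with `f i - m` having value in `[0, k)` -/
def cnt (n : ℕ) (f : Fin n → ZMod (n+1)) (m k : ℕ) : ℕ :=
  ((Finset.univ : Finset (Fin n)).filter (fun i => (f i - (m : ZMod (n+1))).val < k)).card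

/-- linearized prefix count -/
def acc (n : ℕ) (f : Fin n → ZMod (n+1)) (t : ℕ) : ℤ :=
  (n : ℤ) * (t / (n+1) : ℕ) + cnt n f 0 (t % (n+1))

lemma cnt_eq_sum (n : ℕ) (f : Fin n → ZMod (n+1)) (m k : ℕ) :
    cnt n f m k = ∑ i : Fin n, if (f i - (m : ZMod (n+1))).val < k then 1 else 0 := by
  rw [cnt, Finset.card_filter]

lemma acc_add (n : ℕ) (f : Fin n → ZMod (n+1)) (m k : ℕ) (hk : k ≤ n + 1) :
    acc n f (m + k) = acc n f m + cnt n f m k := by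
  have hq : m = (n+1) * (m / (n+1)) + m % (n+1) := (Nat.div_add_mod m (n+1)).symm
  set q := m / (n+1) with hqd
  set r := m % (n+1) with hrd
  have hrlt : r < n + 1 := Nat.mod_lt _ (Nat.succ_pos n)
  by_cases hcase : r + k < n + 1
  · have h1 : m + k = (n+1) * q + (r + k) := by omega
    have hdiv : (m+k)/(n+1) = q := by
      rw [h1, Nat.mul_add_div (Nat.succ_pos n), Nat.div_eq_of_lt hcase, Nat.add_zero]
    have hmod : (m+k)%(n+1) = r + k := by
      rw [h1, Nat.mul_add_mod]
      exact Nat.mod_eq_of_lt hcase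
    have key : cnt n f 0 (r+k) = cnt n f 0 r + cnt n f m k := by
      rw [cnt_eq_sum, cnt_eq_sum, cnt_eq_sum, ← Finset.sum_add_distrib]
      refine Finset.sum_congr rfl (fun i _ => ?_)
      have hv : (f i).val < n + 1 := ZMod.val_lt _
      have hsv := zmod_sub_val (f i) m
      rw [← hrd] at hsv
      simp only [Nat.cast_zero, sub_zero, hsv]
      split_ifs <;> omega
    rw [acc, acc, hdiv, hmod, key, ← hqd, ← hrd]
    push_cast
    ring
  · have h1 : m + k = (n+1) * (q + 1) + (r + k - (n+1)) := by
      have := Nat.mul_add_one (n+1) q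
      omega
    have hlt2 : r + k - (n+1) < n + 1 := by omega
    have hdiv : (m+k)/(n+1) = q + 1 := by
      rw [h1, Nat.mul_add_div (Nat.succ_pos n), Nat.div_eq_of_lt hlt2, Nat.add_zero]
    have hmod : (m+k)%(n+1) = r + k - (n+1) := by
      rw [h1, Nat.mul_add_mod]
      exact Nat.mod_eq_of_lt hlt2
    have key : cnt n f m k + cnt n f 0 r = n + cnt n f 0 (r + k - (n+1)) := by
      have aux : ∀ g : Fin n → ℕ, (n : ℕ) + ∑ i, g i = ∑ i, (1 + g i) := fun g => by
        rw [Finset.sum_add_distrib]; simp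
      rw [cnt_eq_sum, cnt_eq_sum, cnt_eq_sum, ← Finset.sum_add_distrib, aux]
      refine Finset.sum_congr rfl (fun i _ => ?_)
      have hv : (f i).val < n + 1 := ZMod.val_lt _
      have hsv := zmod_sub_val (f i) m
      rw [← hrd] at hsv
      simp only [Nat.cast_zero, sub_zero, hsv]
      split_ifs <;> omega
    rw [acc, acc, hdiv, hmod, ← hqd, ← hrd]
    have : (cnt n f m k : ℤ) + cnt n f 0 r = n + cnt n f 0 (r + k - (n+1)) := by
      exact_mod_cast congrArg (Nat.cast : ℕ → ℤ) key
    push_cast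
    linarith [this]

lemma acc_period (n : ℕ) (f : Fin n → ZMod (n+1)) (m : ℕ) :
    acc n f (m + (n+1)) = acc n f m + n := by
  rw [acc_add n f m (n+1) (le_refl _)]
  congr 1
  rw [cnt]
  have : ((Finset.univ : Finset (Fin n)).filter
      (fun i => (f i - (m : ZMod (n+1))).val < n + 1)) = Finset.univ := by
    refine Finset.filter_true_of_mem (fun i _ => ZMod.val_lt _)
  rw [this, Finset.card_univ, Fintype.card_fin]

/-- height function -/
def hf (n : ℕ) (f : Fin n → ZMod (n+1)) (t : ℕ) : ℤ := acc n f t - t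

lemma hf_period (n : ℕ) (f : Fin n → ZMod (n+1)) (m : ℕ) :
    hf n f (m + (n+1)) = hf n f m - 1 := by
  rw [hf, hf, acc_period]
  push_cast
  ring

/-- parking condition on `ZMod (n+1)`-valued functions (values shifted down by 1) -/
def PF0 (n : ℕ) (g : Fin n → ZMod (n+1)) : Prop :=
  ∀ t, t < n → t + 1 ≤ ((Finset.univ : Finset (Fin n)).filter (fun i => (g i).val ≤ t)).card

lemma cnt_card (n : ℕ) (f : Fin n → ZMod (n+1)) (s t : ℕ) :
    ((Finset.univ : Finset (Fin n)).filter
      (fun i => (f i - (s : ZMod (n+1))).val ≤ t)).card = cnt n f s (t+1) := by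
  rw [cnt]
  congr 1
  apply Finset.filter_congr
  intro i _
  simp [Nat.lt_succ_iff]

lemma cnt_ge_iff (n : ℕ) (f : Fin n → ZMod (n+1)) (s u : ℕ) (hu : u ≤ n + 1) :
    (u ≤ cnt n f s u) ↔ hf n f s ≤ hf n f (s + u) := by
  have hacc := acc_add n f s u hu
  rw [hf, hf, hacc]
  constructor
  · intro h
    have : (u : ℤ) ≤ (cnt n f s u : ℤ) := by exact_mod_cast h
    push_cast
    linarith
  · intro h
    have : (u : ℤ) ≤ (cnt n f s u : ℤ) := by push_cast at h; linarith
    exact_mod_cast this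

lemma pf0_shift_iff (n : ℕ) (f : Fin n → ZMod (n+1)) (s : ℕ) :
    PF0 n (fun i => f i - (s : ZMod (n+1))) ↔
      ∀ u, 1 ≤ u → u ≤ n → hf n f s ≤ hf n f (s + u) := by
  constructor
  · intro hp u hu1 hun
    have ht := hp (u-1) (by omega)
    rw [cnt_card] at ht
    have h2 : u ≤ cnt n f s u := by
      have : u - 1 + 1 = u := by omega
      rwa [this] at ht
    exact (cnt_ge_iff n f s u (by omega)).mp h2
  · intro hh t htn
    have := (cnt_ge_iff n f s (t+1) (by omega)).mpr (hh (t+1) (by omega) (by omega))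
    rw [cnt_card]
    exact this

/-- the key cycle lemma: a unique starting shift works -/
lemma exists_unique_start (n : ℕ) (f : Fin n → ZMod (n+1)) :
    ∃! s, s ≤ n ∧ ∀ u, 1 ≤ u → u ≤ n → hf n f s ≤ hf n f (s + u) := by
  -- existence : take the least global minimizer over [0, n]
  have hne : (Finset.range (n+1)).Nonempty := ⟨0, by simp⟩
  obtain ⟨s₀, hs₀mem, hs₀min⟩ :=
    Finset.exists_min_image (Finset.range (n+1)) (hf n f) hne
  -- least minimizer
  classical
  let P : ℕ → Prop := fun s => s ≤ n ∧ ∀ t, t ≤ n → hf n f s ≤ hf n f t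
  have hPs₀ : P s₀ := ⟨by
      have := Finset.mem_range.mp hs₀mem; omega,
    fun t ht => hs₀min t (Finset.mem_range.mpr (by omega))⟩
  have hex : ∃ s, P s := ⟨s₀, hPs₀⟩
  let s := Nat.find hex
  have hPs : P s := Nat.find_spec hex
  have hleast : ∀ t, t < s → ¬ P t := fun t ht => Nat.find_min hex ht
  have hstrict : ∀ t, t < s → hf n f s < hf n f t := by
    intro t ht
    have h1 : hf n f s ≤ hf n f t := hPs.2 t (by omega)
    rcases lt_or_eq_of_le h1 with h | h
    · exact h
    · exfalso
      apply hleast t ht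
      refine ⟨by omega, fun t' ht' => ?_⟩
      rw [← h]
      exact hPs.2 t' ht'
  refine ⟨s, ⟨hPs.1, fun u hu1 hun => ?_⟩, ?_⟩
  · by_cases hc : s + u ≤ n
    · exact hPs.2 (s + u) hc
    · have ht' : s + u - (n+1) < s := by omega
      have heq : s + u = (s + u - (n+1)) + (n+1) := by omega
      rw [heq, hf_period]
      have := hstrict (s + u - (n+1)) ht'
      omega
  · -- uniqueness
    intro s' ⟨hs'n, hs'cond⟩
    by_contra hne'
    have haux : ∀ a b : ℕ, a < b → b ≤ n →
        (∀ u, 1 ≤ u → u ≤ n → hf n f a ≤ hf n f (a + u)) →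
        (∀ u, 1 ≤ u → u ≤ n → hf n f b ≤ hf n f (b + u)) → False := by
      intro a b hab hbn hca hcb
      have h1 : hf n f a ≤ hf n f b := by
        have := hca (b - a) (by omega) (by omega)
        have heq : a + (b - a) = b := by omega
        rwa [heq] at this
      have h2 : hf n f b ≤ hf n f (a + (n+1)) := by
        have := hcb (a + (n+1) - b) (by omega) (by omega)
        have heq : b + (a + (n+1) - b) = a + (n+1) := by omega
        rwa [heq] at this
      rw [hf_period] at h2
      omega
    rcases lt_trichotomy s' s with h | h | h
    · exact haux s' s h hPs.1 hs'cond (fun u h1 h2 => by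
        by_cases hc : s + u ≤ n
        · exact hPs.2 (s + u) hc
        · have ht' : s + u - (n+1) < s := by omega
          have heq : s + u = (s + u - (n+1)) + (n+1) := by omega
          rw [heq, hf_period]
          have := hstrict (s + u - (n+1)) ht'
          omega)
    · exact hne' h
    · exact haux s s' h hs'n (fun u h1 h2 => by
        by_cases hc : s + u ≤ n
        · exact hPs.2 (s + u) hc
        · have ht' : s + u - (n+1) < s := by omega
          have heq : s + u = (s + u - (n+1)) + (n+1) := by omega
          rw [heq, hf_period]
          have := hstrict (s + u - (n+1)) ht'
          omega) hs'cond

lemma exists_unique_shift (n : ℕ) (f : Fin n → ZMod (n+1)) :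
    ∃! c : ZMod (n+1), PF0 n (fun i => f i + c) := by
  obtain ⟨s₀, ⟨hs₀n, hs₀c⟩, hs₀u⟩ := exists_unique_start n f
  refine ⟨-(s₀ : ZMod (n+1)), ?_, ?_⟩
  · have heq : (fun i => f i + -(s₀ : ZMod (n+1))) = (fun i => f i - (s₀ : ZMod (n+1))) := by
      funext i; ring
    show PF0 n (fun i => f i + -(s₀ : ZMod (n+1)))
    rw [heq]
    exact (pf0_shift_iff n f s₀).mpr hs₀c
  · intro c hc
    set s := (-c).val with hs
    have hsn : s ≤ n := by have := ZMod.val_lt (-c); omega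
    have hcs : (s : ZMod (n+1)) = -c := ZMod.natCast_zmod_val (-c)
    have heq : (fun i => f i - (s : ZMod (n+1))) = (fun i => f i + c) := by
      funext i; rw [hcs]; ring
    have hcond := (pf0_shift_iff n f s).mp (by rw [heq]; exact hc)
    have : s = s₀ := hs₀u s ⟨hsn, hcond⟩
    rw [← this, hcs]
    ring

/-- the chosen shift making `f` park -/
noncomputable def pollakC (n : ℕ) (f : Fin n → ZMod (n+1)) : ZMod (n+1) :=
  (exists_unique_shift n f).choose

lemma pollakC_spec (n : ℕ) (f : Fin n → ZMod (n+1)) :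
    PF0 n (fun i => f i + pollakC n f) :=
  (exists_unique_shift n f).choose_spec.1

lemma pollakC_unique (n : ℕ) (f : Fin n → ZMod (n+1)) (c : ZMod (n+1))
    (hc : PF0 n (fun i => f i + c)) : c = pollakC n f :=
  (exists_unique_shift n f).choose_spec.2 c hc

noncomputable def pollakEquiv (n : ℕ) :
    (Fin n → ZMod (n+1)) ≃ ({g : Fin n → ZMod (n+1) // PF0 n g} × ZMod (n+1)) where
  toFun f := (⟨fun i => f i + pollakC n f, pollakC_spec n f⟩, pollakC n f)
  invFun p := fun i => p.1.1 i - p.2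
  left_inv f := by funext i; simp
  right_inv p := by
    obtain ⟨⟨g, hg⟩, c⟩ := p
    have h1 : (fun i => (fun j => g j - c) i + c) = g := by funext i; simp
    have h2 : c = pollakC n (fun j => g j - c) :=
      pollakC_unique n _ c (by rw [h1]; exact hg)
    simp only [Prod.mk.injEq, Subtype.mk.injEq]
    constructor
    · rw [← h2]; exact h1
    · exact h2.symm

lemma card_PF0 (n : ℕ) (hn : 1 ≤ n) :
    Nat.card {g : Fin n → ZMod (n+1) // PF0 n g} = (n+1)^(n-1) := by
  have h1 : Nat.card (Fin n → ZMod (n+1)) = (n+1)^n := by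
    rw [Nat.card_eq_fintype_card, Fintype.card_fun, ZMod.card, Fintype.card_fin]
  have h2 := Nat.card_congr (pollakEquiv n)
  rw [h1, Nat.card_prod, Nat.card_eq_fintype_card (α := ZMod (n+1)), ZMod.card] at h2
  have h3 : (n+1)^n = (n+1)^(n-1) * (n+1) := by
    rw [← pow_succ]
    congr 1
    omega
  rw [h3] at h2
  exact Nat.eq_of_mul_eq_mul_right (Nat.succ_pos n) h2.symm

lemma pf_val_le (n : ℕ) (π : Fin n → ℕ)
    (hcount : ∀ k, k ≤ n →
      k ≤ ((Finset.univ : Finset (Fin n)).filter (fun i => π i ≤ k)).card) (i : Fin n) :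
    π i ≤ n := by
  have h1 := hcount n le_rfl
  have h2 : ((Finset.univ : Finset (Fin n)).filter (fun i => π i ≤ n)).card ≤ n := by
    calc _ ≤ (Finset.univ : Finset (Fin n)).card := Finset.card_le_card (Finset.filter_subset _ _)
      _ = n := by rw [Finset.card_univ, Fintype.card_fin]
  have h3 : ((Finset.univ : Finset (Fin n)).filter (fun i => π i ≤ n)) = Finset.univ := by
    apply Finset.eq_univ_of_card
    rw [Fintype.card_fin]
    omega
  have := Finset.mem_filter.mp (h3 ▸ Finset.mem_univ i)
  exact this.2

lemma toPF0 (n : ℕ) (π : Fin n → ℕ) (hπ : IsPF n π) :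
    PF0 n (fun i => ((π i - 1 : ℕ) : ZMod (n+1))) := by
  obtain ⟨hpos, hcount⟩ := (isPF_iff π).mp hπ
  intro t ht
  have hval : ∀ i, (((π i - 1 : ℕ) : ZMod (n+1))).val = π i - 1 := fun i =>
    ZMod.val_cast_of_lt (by have := pf_val_le n π hcount i; omega)
  have heq : ((Finset.univ : Finset (Fin n)).filter
      (fun i => (((π i - 1 : ℕ) : ZMod (n+1))).val ≤ t)) =
      ((Finset.univ : Finset (Fin n)).filter (fun i => π i ≤ t + 1)) := by
    apply Finset.filter_congr
    intro i _
    rw [hval i]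
    have := hpos i
    omega
  rw [heq]
  exact hcount (t+1) (by omega)

lemma fromPF0 (n : ℕ) (g : Fin n → ZMod (n+1)) (hg : PF0 n g) :
    IsPF n (fun i => (g i).val + 1) := by
  rw [isPF_iff]
  refine ⟨fun i => by omega, fun k hk => ?_⟩
  rcases Nat.eq_zero_or_pos k with rfl | hkpos
  · exact Nat.zero_le _
  · have heq : ((Finset.univ : Finset (Fin n)).filter (fun i => (g i).val + 1 ≤ k)) =
        ((Finset.univ : Finset (Fin n)).filter (fun i => (g i).val ≤ k - 1)) := by
      apply Finset.filter_congr
      intro i _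
      omega
    have := hg (k-1) (by omega)
    rw [heq]
    omega

noncomputable def pfEquiv (n : ℕ) :
    {π : Fin n → ℕ // IsPF n π} ≃ {g : Fin n → ZMod (n+1) // PF0 n g} where
  toFun p := ⟨fun i => ((p.1 i - 1 : ℕ) : ZMod (n+1)), toPF0 n p.1 p.2⟩
  invFun q := ⟨fun i => (q.1 i).val + 1, fromPF0 n q.1 q.2⟩
  left_inv p := by
    obtain ⟨π, hπ⟩ := p
    obtain ⟨hpos, hcount⟩ := (isPF_iff π).mp hπ
    apply Subtype.ext
    funext i
    simp only
    rw [ZMod.val_cast_of_lt (by have := pf_val_le n π hcount i; omega)]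
    have := hpos i
    omega
  right_inv q := by
    obtain ⟨g, hg⟩ := q
    apply Subtype.ext
    funext i
    simp only [Nat.add_sub_cancel]
    exact ZMod.natCast_zmod_val (g i)

/-- The number of parking functions of length `n` equals `(n+1)^(n-1)`. -/
theorem card_parking_functions (n : ℕ) (hn : 1 ≤ n) :
    Nat.card {π : Fin n → ℕ // IsPF n π} = (n+1)^(n-1) := by
  rw [Nat.card_congr (pfEquiv n)]
  exact card_PF0 n hn
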